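/- Let A = R/I be a graded Artinian Gorenstein quotient of R = K[w,x,y,z] of socle degree j. Let J ⊆ R be a homogeneous ideal which is saturated (J : M = J) and which equals the saturation of the ideal generated by its degree-i graded piece J_i, for some i with 2 ≤ i ≤ j. If J_i ⊆ I_i, then J_u ⊆ I_u for all 0 ≤ u ≤ i; if moreover J_i = I_i, then J_u = I_u for all 0 ≤ u ≤ i. -/

import Mathlib

open MvPolynomial

noncomputable section

/-- The Hilbert function of the graded quotient `R/I`, where
`R = K[x_1,...,x_n]`: the dimension of the image in `R/I` of the space of
degree-`i` homogeneous forms. -/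
def hilb (n : ℕ) (K : Type*) [Field K] (I : Ideal (MvPolynomial (Fin n) K)) (i : ℕ) : ℕ :=
  Module.finrank K
    ((homogeneousSubmodule (Fin n) K i).map (Ideal.Quotient.mkₐ K I).toLinearMap)

/-- The socle `(0 : A_+)` of `A = R/I`: the elements killed by (the images of)
all the variables, equivalently by the irrelevant maximal ideal. -/
def socleSub (n : ℕ) (K : Type*) [Field K] (I : Ideal (MvPolynomial (Fin n) K)) :
    Submodule K (MvPolynomial (Fin n) K ⧸ I) :=
  ⨅ k : Fin n, LinearMap.ker (LinearMap.mulLeft K (Ideal.Quotient.mk I (X k)))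

/-- A homogeneous (graded) ideal: one containing each homogeneous component of
each of its elements. -/
def IdealHomog {n : ℕ} {K : Type*} [Field K] (I : Ideal (MvPolynomial (Fin n) K)) : Prop :=
  ∀ f ∈ I, ∀ d : ℕ, homogeneousComponent d f ∈ I

/-- `R/I` is a graded Artinian Gorenstein quotient of `R = K[x_1,...,x_n]`
of socle degree `j`: `I` is homogeneous, `R/I` is finite dimensional over `K`
with 1-dimensional socle, and `j` is the top nonzero degree. -/
def IsAG (n : ℕ) (K : Type*) [Field K] (I : Ideal (MvPolynomial (Fin n) K)) (j : ℕ) : Prop :=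
  IdealHomog I ∧ FiniteDimensional K (MvPolynomial (Fin n) K ⧸ I) ∧
    Module.finrank K (socleSub n K I) = 1 ∧
    hilb n K I j ≠ 0 ∧ ∀ i, j < i → hilb n K I i = 0

/-- Macaulay's bound `c^{(d)}`: writing `c = C(k_d,d) + ... + C(k_1,1)` with
`k_d > k_d-1 > ... > k_1 ≥ 0` (the `d`-th Macaulay expansion, computed greedily),
`c^{(d)} = C(k_d+1,d+1) + ... + C(k_1+1,2)`; by convention `0^{(d)} = 0`. -/
def macB : ℕ → ℕ → ℕ
  | _, 0 => 0
  | c, (d+1) =>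
    if c = 0 then 0 else
      let k := Nat.findGreatest (fun k => Nat.choose k (d+1) ≤ c) (c + d + 1)
      Nat.choose (k+1) (d+2) + macB (c - Nat.choose k (d+1)) d

/-- `(t_0, ..., t_m)` is an O-sequence: `t_0 = 1` and `t_{i+1} ≤ t_i^{(i)}`
for `1 ≤ i ≤ m-1`. -/
def IsOSeq (t : ℕ → ℕ) (m : ℕ) : Prop :=
  t 0 = 1 ∧ ∀ i, 1 ≤ i → i + 1 ≤ m → t (i + 1) ≤ macB (t i) i

/-- `ΔH_{≤ m}` is an O-sequence: the first differences `ΔH_i = h_i - h_{i-1}`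
(with `ΔH_0 = 1`) are nonnegative for `i ≤ m`, and `(ΔH_0, ..., ΔH_m)` is an
O-sequence. -/
def DeltaOSeq (h : ℕ → ℕ) (m : ℕ) : Prop :=
  (∀ i, 1 ≤ i → i ≤ m → h (i - 1) ≤ h i) ∧
    IsOSeq (fun i => if i = 0 then 1 else h i - h (i - 1)) m

/-- The irrelevant maximal ideal `M = (w,x,y,z)` of `R = K[w,x,y,z]`. -/
def Mirr (K : Type*) [Field K] : Ideal (MvPolynomial (Fin 4) K) :=
  Ideal.span (Set.range X)

/-- The saturation `∪_n (N : M^n)` of a homogeneous ideal `N` of `K[w,x,y,z]`. -/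
def idealSaturation {K : Type*} [Field K] (N : Ideal (MvPolynomial (Fin 4) K)) :
    Ideal (MvPolynomial (Fin 4) K) :=
  ⨆ n : ℕ, Submodule.colon N ((Mirr K ^ n : Ideal (MvPolynomial (Fin 4) K)) : Set (MvPolynomial (Fin 4) K))

section Aux
set_option synthInstance.maxHeartbeats 1000000
set_option maxHeartbeats 1000000
variable {K : Type*} [Field K]


-- high degree homogeneous elements lie in I
lemma mem_of_high {j : ℕ} {I : Ideal (MvPolynomial (Fin 4) K)} (hI : IsAG 4 K I j)
    {d : ℕ} (hd : j < d) {f : MvPolynomial (Fin 4) K} (hf : f.IsHomogeneous d) : f ∈ I := by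
  haveI := hI.2.1
  have h0 : hilb 4 K I d = 0 := hI.2.2.2.2 d hd
  unfold hilb at h0
  have hbot := Submodule.finrank_eq_zero.mp h0
  have hm : Ideal.Quotient.mk I f ∈
      ((homogeneousSubmodule (Fin 4) K d).map (Ideal.Quotient.mkₐ K I).toLinearMap) :=
    ⟨f, (mem_homogeneousSubmodule _ _).2 hf, rfl⟩
  rw [hbot, Submodule.mem_bot] at hm
  exact (Ideal.Quotient.eq_zero_iff_mem).1 hm

lemma exists_socle_gen {j : ℕ} {I : Ideal (MvPolynomial (Fin 4) K)} (hI : IsAG 4 K I j) :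
    ∃ g : MvPolynomial (Fin 4) K, g.IsHomogeneous j ∧ g ∉ I := by
  by_contra h
  push_neg at h
  have h0 : hilb 4 K I j = 0 := by
    unfold hilb
    have : ((homogeneousSubmodule (Fin 4) K j).map (Ideal.Quotient.mkₐ K I).toLinearMap) = ⊥ := by
      rw [Submodule.eq_bot_iff]
      rintro x ⟨p, hp, rfl⟩
      have := h p ((mem_homogeneousSubmodule _ _).1 hp)
      simpa [Ideal.Quotient.eq_zero_iff_mem] using this
    rw [this]; simp
  exact hI.2.2.2.1 h0

lemma key {j : ℕ} {I : Ideal (MvPolynomial (Fin 4) K)} (hI : IsAG 4 K I j)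
    {u : ℕ} {f : MvPolynomial (Fin 4) K} (hf : f.IsHomogeneous u) (hfI : f ∉ I) :
    ∀ t : ℕ, u + t ≤ j → ∃ h : MvPolynomial (Fin 4) K, h.IsHomogeneous t ∧ f * h ∉ I := by
  haveI := hI.2.1
  obtain ⟨g, hg, hgI⟩ := exists_socle_gen hI
  have hmkg : Ideal.Quotient.mk I g ≠ 0 := fun h =>
    hgI ((Ideal.Quotient.eq_zero_iff_mem).1 h)
  have hgsoc : Ideal.Quotient.mk I g ∈ socleSub 4 K I := by
    rw [socleSub, Submodule.mem_iInf]
    intro k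
    rw [LinearMap.mem_ker, LinearMap.mulLeft_apply, ← map_mul]
    exact (Ideal.Quotient.eq_zero_iff_mem).2
      (mem_of_high hI (Nat.lt_succ_self j) (by rw [mul_comm]; exact hg.mul (isHomogeneous_X K k)))
  -- socle = span of mk g
  have hsoc : socleSub 4 K I = Submodule.span K {Ideal.Quotient.mk I g} := by
    refine (Submodule.eq_of_le_of_finrank_le ((Submodule.span_singleton_le_iff_mem _ _).2 hgsoc) ?_).symm
    rw [hI.2.2.1, finrank_span_singleton hmkg]
  intro t
  induction t with
  | zero =>
    intro _
    exact ⟨1, isHomogeneous_one _ _, by simpa using hfI⟩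
  | succ t ih =>
    intro hut
    obtain ⟨h, hh, hfh⟩ := ih (by omega)
    by_cases hex : ∃ k : Fin 4, X k * (f * h) ∉ I
    · obtain ⟨k, hk⟩ := hex
      refine ⟨h * X k, by simpa using hh.mul (isHomogeneous_X K k), ?_⟩
      intro hmem
      exact hk (by rwa [show X k * (f * h) = f * (h * X k) by ring])
    · push_neg at hex
      exfalso
      -- mk (f*h) is in the socle
      have hsocmem : Ideal.Quotient.mk I (f * h) ∈ socleSub 4 K I := by
        rw [socleSub, Submodule.mem_iInf]
        intro k
        rw [LinearMap.mem_ker, LinearMap.mulLeft_apply, ← map_mul]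
        exact (Ideal.Quotient.eq_zero_iff_mem).2 (hex k)
      rw [hsoc, Submodule.mem_span_singleton] at hsocmem
      obtain ⟨c, hc⟩ := hsocmem
      have hcne : c ≠ 0 := by
        rintro rfl
        rw [zero_smul] at hc
        exact hfh ((Ideal.Quotient.eq_zero_iff_mem).1 hc.symm)
      have hcg : Ideal.Quotient.mk I (C c * g) = Ideal.Quotient.mk I (f * h) := by
        rw [← smul_eq_C_mul, ← hc]
        exact map_smul (Ideal.Quotient.mkₐ K I) c g
      have hdiff : f * h - C c * g ∈ I := by
        rw [← Ideal.Quotient.eq_zero_iff_mem, map_sub, hcg, sub_self]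
      have hcomp := hI.1 _ hdiff j
      rw [map_sub] at hcomp
      have h1 : homogeneousComponent j (f * h) = 0 := by
        have : (f * h) ∈ homogeneousSubmodule (Fin 4) K (u + t) :=
          (mem_homogeneousSubmodule _ _).2 (hf.mul hh)
        rw [homogeneousComponent_of_mem this, if_neg (by omega)]
      have h2 : homogeneousComponent j (C c * g) = C c * g := by
        have : (C c * g) ∈ homogeneousSubmodule (Fin 4) K j :=
          (mem_homogeneousSubmodule _ _).2 (by simpa using (isHomogeneous_C (Fin 4) c).mul hg)
        rw [homogeneousComponent_of_mem this, if_pos rfl]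
      rw [h1, h2, zero_sub] at hcomp
      have : C c * g ∈ I := (Ideal.neg_mem_iff I).1 hcomp
      have : g ∈ I := by
        have := I.mul_mem_left (C c⁻¹) this
        rwa [← mul_assoc, ← map_mul, inv_mul_cancel₀ hcne, map_one, one_mul] at this
      exact hgI this

end Aux

/-- Let `A = R/I` be a graded Artinian Gorenstein quotient of
`R = K[w,x,y,z]` of socle degree `j`, and let `J` be a saturated homogeneous
ideal which equals the saturation of the ideal generated by its degree-`i`
piece, for some `2 ≤ i ≤ j`.  If `J_i ⊆ I_i` then `J_u ⊆ I_u` for all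
`0 ≤ u ≤ i`; if moreover `J_i = I_i` then `J_u = I_u` for all `0 ≤ u ≤ i`. -/
theorem statement_0 {K : Type*} [Field K] [IsAlgClosed K] [CharZero K]
    (j : ℕ) (I J : Ideal (MvPolynomial (Fin 4) K))
    (hI : IsAG 4 K I j)
    (hJhom : IdealHomog J)
    (hJsat : Submodule.colon J (Mirr K) = J)
    (i : ℕ) (hi2 : 2 ≤ i) (hij : i ≤ j)
    (hJgen : J = idealSaturation (Ideal.span {f | f ∈ J ∧ f.IsHomogeneous i}))
    (hJI : ∀ f ∈ J, f.IsHomogeneous i → f ∈ I) :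
    (∀ u ≤ i, ∀ f ∈ J, f.IsHomogeneous u → f ∈ I) ∧
    ((∀ f ∈ I, f.IsHomogeneous i → f ∈ J) →
      ∀ u ≤ i, ∀ f : MvPolynomial (Fin 4) K, f.IsHomogeneous u → (f ∈ J ↔ f ∈ I)) := by
  have part1 : ∀ u ≤ i, ∀ f ∈ J, f.IsHomogeneous u → f ∈ I := by
    intro u hu f hfJ hf
    by_contra hfI
    obtain ⟨h, hh, hfh⟩ := key hI hf hfI (i - u) (by omega)
    refine hfh (hJI _ (J.mul_mem_right h hfJ) ?_)
    have := hf.mul hh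
    rwa [Nat.add_sub_cancel' hu] at this
  refine ⟨part1, fun hIJ => ?_⟩
  have main : ∀ k : ℕ, ∀ u, u ≤ i → i - u ≤ k →
      ∀ f ∈ I, f.IsHomogeneous u → f ∈ J := by
    intro k
    induction k with
    | zero =>
      intro u hu h0 f hfI hf
      have : u = i := by omega
      subst this
      exact hIJ f hfI hf
    | succ k ih =>
      intro u hu hk f hfI hf
      by_cases hcase : i - u ≤ k
      · exact ih u hu hcase f hfI hf
      · have hXf : ∀ m : Fin 4, X m * f ∈ J := fun m =>
          ih (u + 1) (by omega) (by omega) (X m * f) (I.mul_mem_left _ hfI)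
            (by rw [mul_comm]; simpa using hf.mul (isHomogeneous_X K m))
        have hall : ∀ p ∈ Mirr K, f * p ∈ J := by
          intro p hp
          induction hp using Submodule.span_induction with
          | mem q hq =>
            obtain ⟨m, rfl⟩ := hq
            rw [mul_comm]
            exact hXf m
          | zero => simp
          | add a b _ _ ha hb => rw [mul_add]; exact J.add_mem ha hb
          | smul r a _ ha =>
            rw [smul_eq_mul, mul_comm r a, ← mul_assoc]
            exact J.mul_mem_right r ha
        rw [← hJsat, Submodule.mem_colon]
        intro p hp
        rw [smul_eq_mul]
        exact hall p hp
  intro u hu f hf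
  exact ⟨fun hfJ => part1 u hu f hfJ hf, fun hfI => main i u hu (by omega) f hfI hf⟩

end
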